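/- Let X be an infinite countable set, H ≤ S(X) a countable subgroup, Σ ≤ H a finite subgroup and θ : Σ → H an injective homomorphism such that Σ and θ(Σ) act freely on X, and let Z and π_w be as defined. If the action H ↷ X has infinite orbits, then the set U = {w ∈ Z : π_w is transitive} is a dense G_δ subset of Z. -/

import Mathlib

/-- `C` is a Følner sequence for the action of `G` on `X` given by `π`. -/
def IsFolnerSeq {G X : Type*} [Group G] (π : G →* Equiv.Perm X) (C : ℕ → Set X) : Prop :=
  (∀ n, (C n).Finite ∧ (C n).Nonempty) ∧
    ∀ g : G, Filter.Tendsto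
      (fun n => ((symmDiff (C n) (π g '' C n)).ncard : ℝ) / (C n).ncard)
      Filter.atTop (nhds 0)

/-- The action of `G` on `X` given by `π` is amenable (admits a Følner sequence). -/
def IsAmenableAction {G X : Type*} [Group G] (π : G →* Equiv.Perm X) : Prop :=
  ∃ C : ℕ → Set X, IsFolnerSeq π C

/-- The action given by `π` has infinite orbits. -/
def HasInfiniteOrbits {G X : Type*} [Group G] (π : G →* Equiv.Perm X) : Prop :=
  ∀ x : X, {y : X | ∃ g : G, π g x = y}.Infinite

/-- The action given by `π` is transitive. -/
def IsTransitiveAction {G X : Type*} [Group G] (π : G →* Equiv.Perm X) : Prop :=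
  ∀ x y : X, ∃ g : G, π g x = y

/-- The action given by `π` is almost free: every non-trivial element has finitely many
fixed points. -/
def IsAlmostFreeAction {G X : Type*} [Group G] (π : G →* Equiv.Perm X) : Prop :=
  ∀ g : G, g ≠ 1 → {x : X | π g x = x}.Finite

/-- The class 𝒜 of countable groups admitting a faithful, transitive and amenable action
on an infinite countable set. -/
def InClassA (G : Type*) [Group G] : Prop :=
  ∃ (X : Type) (_ : Countable X) (_ : Infinite X) (π : G →* Equiv.Perm X),
    Function.Injective π ∧ IsTransitiveAction π ∧ IsAmenableAction π

/-- The class 𝒜_ℱ of countable groups admitting an amenable, almost free action with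
infinite orbits on a countable set. -/
def InClassAF (G : Type*) [Group G] : Prop :=
  ∃ (X : Type) (_ : Countable X) (π : G →* Equiv.Perm X),
    IsAmenableAction π ∧ IsAlmostFreeAction π ∧ HasInfiniteOrbits π

/-- The topology of pointwise convergence on the group `S(X)` of all bijections of a
(discrete, countable) set `X`:  `wₙ → w` iff for every finite `F ⊆ X` eventually
`wₙ|_F = w|_F`. -/
noncomputable instance permPointwiseTopology (X : Type*) :
    TopologicalSpace (Equiv.Perm X) :=
  TopologicalSpace.induced (fun w : Equiv.Perm X => (w : X → X))
    (@Pi.topologicalSpace X (fun _ => X) (fun _ => ⊥))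

section HNNBaire

variable {X : Type*} (H : Subgroup (Equiv.Perm X)) (A B : Subgroup H) (θ : A ≃* B)

/-- The set `Z = {w ∈ S(X) : w σ w⁻¹ = θ(σ) for all σ ∈ A}`. -/
def hnnZ : Set (Equiv.Perm X) :=
  {w | ∀ a : A, w * ((a : H) : Equiv.Perm X) * w⁻¹ = (((θ a : B) : H) : Equiv.Perm X)}

/-- For `w ∈ Z`, the homomorphism `π_w : HNN(H, A, θ) →* S(X)` determined by
`π_w(t) = w` and `π_w(h) = h` for `h ∈ H`. -/
def hnnPi (w : hnnZ H A B θ) : HNNExtension H A B θ →* Equiv.Perm X :=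
  HNNExtension.lift H.subtype w.1 (fun a => by
    have h := w.2 a
    calc w.1 * H.subtype a = w.1 * ((a : H) : Equiv.Perm X) * w.1⁻¹ * w.1 := by
          show w.1 * ((a : H) : Equiv.Perm X) = _
          group
      _ = H.subtype ((θ a : B) : H) * w.1 := by rw [h]; rfl)

end HNNBaire


section HNNProof

open Topology

variable {X : Type*}

/-- Evaluation sets are open in the pointwise topology on `Equiv.Perm X`. -/
lemma perm_inv_apply_self' (w : Equiv.Perm X) (z : X) : w⁻¹ (w z) = z :=
  Equiv.symm_apply_apply w z

lemma perm_apply_inv_self' (w : Equiv.Perm X) (z : X) : w (w⁻¹ z) = z :=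
  Equiv.apply_symm_apply w z

lemma isOpen_permEval (x y : X) : IsOpen {w : Equiv.Perm X | w x = y} := by
  letI : TopologicalSpace X := ⊥
  haveI : DiscreteTopology X := ⟨rfl⟩
  have h : Continuous (fun w : Equiv.Perm X => (w : X → X)) := continuous_induced_dom
  have he : {w : Equiv.Perm X | w x = y} =
      (fun w : Equiv.Perm X => (w : X → X)) ⁻¹' ((fun f : X → X => f x) ⁻¹' {y}) := rfl
  rw [he]
  exact ((isOpen_discrete _).preimage (continuous_apply x)).preimage h

variable {H : Subgroup (Equiv.Perm X)} {A B : Subgroup H} {θ : A ≃* B}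

lemma mem_hnnZ_iff {w : Equiv.Perm X} :
    w ∈ hnnZ H A B θ ↔ ∀ (a : A) (z : X),
      w (((a : H) : Equiv.Perm X) z) = (((θ a : B) : H) : Equiv.Perm X) (w z) := by
  constructor
  · intro hw a z
    have h := Equiv.ext_iff.mp (hw a) (w z)
    simpa [Equiv.Perm.mul_apply, perm_inv_apply_self'] using h
  · intro h a
    ext z
    simp only [Equiv.Perm.mul_apply]
    rw [h a (w⁻¹ z), perm_apply_inv_self']

lemma free_cancel {C : Subgroup H}
    (hfree : ∀ c : C, c ≠ 1 → ∀ x : X, ((c : H) : Equiv.Perm X) x ≠ x)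
    {c c' : C} {z : X}
    (h : ((c : H) : Equiv.Perm X) z = ((c' : H) : Equiv.Perm X) z) : c = c' := by
  by_contra hne
  have h1 : c'⁻¹ * c ≠ 1 := fun e => hne (inv_mul_eq_one.mp e).symm
  have hz : ((H.subtype.comp C.subtype) (c'⁻¹ * c)) z = z := by
    have hcc : (H.subtype.comp C.subtype) c z = (H.subtype.comp C.subtype) c' z := h
    rw [map_mul, map_inv, Equiv.Perm.mul_apply, hcc, perm_inv_apply_self']
  exact hfree (c'⁻¹ * c) h1 z hz

lemma isOpen_hnnPi_eval (H : Subgroup (Equiv.Perm X)) (A B : Subgroup H) (θ : A ≃* B)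
    (g : HNNExtension H A B θ) :
    ∀ x y : X, IsOpen {w : hnnZ H A B θ | hnnPi H A B θ w g x = y} := by
  induction g using HNNExtension.induction_on with
  | of h =>
    intro x y
    by_cases hc : (h : Equiv.Perm X) x = y
    · have he : {w : hnnZ H A B θ | hnnPi H A B θ w (HNNExtension.of h) x = y} = Set.univ := by
        ext w; simp [hnnPi, Subgroup.coe_subtype, hc]
      rw [he]; exact isOpen_univ
    · have he : {w : hnnZ H A B θ | hnnPi H A B θ w (HNNExtension.of h) x = y} = ∅ := by
        ext w; simp [hnnPi, Subgroup.coe_subtype, hc]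
      rw [he]; exact isOpen_empty
  | t =>
    intro x y
    have he : {w : hnnZ H A B θ | hnnPi H A B θ w HNNExtension.t x = y}
        = Subtype.val ⁻¹' {v : Equiv.Perm X | v x = y} := by
      ext w; simp [hnnPi]
    rw [he]
    exact (isOpen_permEval x y).preimage continuous_subtype_val
  | mul g₁ g₂ ih₁ ih₂ =>
    intro x y
    have he : {w : hnnZ H A B θ | hnnPi H A B θ w (g₁ * g₂) x = y}
        = ⋃ z : X, {w : hnnZ H A B θ | hnnPi H A B θ w g₂ x = z}
            ∩ {w : hnnZ H A B θ | hnnPi H A B θ w g₁ z = y} := by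
      ext w
      simp only [Set.mem_setOf_eq, Set.mem_iUnion, Set.mem_inter_iff, map_mul,
        Equiv.Perm.mul_apply]
      exact ⟨fun h => ⟨_, rfl, h⟩, fun ⟨z, hz, h⟩ => by rw [hz]; exact h⟩
    rw [he]
    exact isOpen_iUnion fun z => (ih₂ x z).inter (ih₁ z y)
  | inv g ih =>
    intro x y
    have he : {w : hnnZ H A B θ | hnnPi H A B θ w g⁻¹ x = y}
        = {w : hnnZ H A B θ | hnnPi H A B θ w g y = x} := by
      ext w
      simp only [Set.mem_setOf_eq, map_inv]
      constructor
      · rintro rfl; exact perm_apply_inv_self' _ _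
      · rintro rfl; exact perm_inv_apply_self' _ _
    rw [he]
    exact ih y x

lemma baireSpace_hnnZ [Countable X] (H : Subgroup (Equiv.Perm X)) (A B : Subgroup H)
    (θ : A ≃* B) : BaireSpace (hnnZ H A B θ) := by
  letI : TopologicalSpace X := ⊥
  haveI : DiscreteTopology X := ⟨rfl⟩
  have hind : IsInducing (fun w : Equiv.Perm X => (w : X → X)) := ⟨rfl⟩
  have hcoe : Continuous (fun w : Equiv.Perm X => (w : X → X)) := hind.continuous
  have happ : ∀ z : X, Continuous (fun w : Equiv.Perm X => w z) :=
    fun z => (continuous_apply z).comp hcoe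
  have hinv : Continuous (fun w : Equiv.Perm X => ((w⁻¹ : Equiv.Perm X) : X → X)) := by
    refine continuous_pi fun z => continuous_discrete_rng.2 fun v => ?_
    have he : (fun w : Equiv.Perm X => w⁻¹ z) ⁻¹' {v} = {w : Equiv.Perm X | w v = z} := by
      ext w
      simp only [Set.mem_preimage, Set.mem_singleton_iff, Set.mem_setOf_eq]
      exact ⟨fun h => by rw [← h, perm_apply_inv_self'],
        fun h => by rw [← h, perm_inv_apply_self']⟩
    rw [he]; exact isOpen_permEval v z
  have heval : Continuous (fun q : (X → X) × X => q.1 q.2) := by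
    refine continuous_discrete_rng.2 fun v => ?_
    have he : (fun q : (X → X) × X => q.1 q.2) ⁻¹' {v}
        = ⋃ z : X, {f : X → X | f z = v} ×ˢ ({z} : Set X) := by
      ext q
      simp only [Set.mem_preimage, Set.mem_singleton_iff, Set.mem_iUnion, Set.mem_prod,
        Set.mem_setOf_eq]
      exact ⟨fun h => ⟨q.2, h, rfl⟩, fun ⟨z, hz, hq⟩ => by rw [hq]; exact hz⟩
    rw [he]
    exact isOpen_iUnion fun z =>
      ((isOpen_discrete ({v} : Set X)).preimage (continuous_apply z : Continuous fun f : X → X => f z)).prod (isOpen_discrete _)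
  set e : Equiv.Perm X → (X → X) × (X → X) := fun w => (⇑w, ⇑w⁻¹) with he
  have hecont : Continuous e := hcoe.prodMk hinv
  have heind : IsInducing e := IsInducing.of_comp hecont continuous_fst hind
  have hrange : IsClosed (Set.range e) := by
    have hre : Set.range e = ⋂ z : X,
        ({p : (X → X) × (X → X) | p.2 (p.1 z) = z} ∩ {p | p.1 (p.2 z) = z}) := by
      ext p
      simp only [Set.mem_range, Set.mem_iInter, Set.mem_inter_iff, Set.mem_setOf_eq]
      constructor
      · rintro ⟨w, rfl⟩ z
        exact ⟨perm_inv_apply_self' _ _, perm_apply_inv_self' _ _⟩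
      · intro hp
        exact ⟨⟨p.1, p.2, fun z => (hp z).1, fun z => (hp z).2⟩, rfl⟩
    rw [hre]
    refine isClosed_iInter fun z => IsClosed.inter ?_ ?_
    · exact isClosed_eq (heval.comp
        (continuous_snd.prodMk ((continuous_apply z).comp continuous_fst))) continuous_const
    · exact isClosed_eq (heval.comp
        (continuous_fst.prodMk ((continuous_apply z).comp continuous_snd))) continuous_const
  have hce : IsClosedEmbedding e :=
    ⟨⟨heind, fun w w' hww' => Equiv.coe_fn_injective (congrArg Prod.fst hww')⟩, hrange⟩
  have hZc : IsClosed (hnnZ H A B θ) := by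
    have hze : hnnZ H A B θ = ⋂ (a : A), ⋂ (z : X),
        {w : Equiv.Perm X |
          w (((a : H) : Equiv.Perm X) z) = (((θ a : B) : H) : Equiv.Perm X) (w z)} := by
      ext w
      simp only [Set.mem_iInter, Set.mem_setOf_eq]
      exact mem_hnnZ_iff
    rw [hze]
    refine isClosed_iInter fun a => isClosed_iInter fun z => isClosed_eq (happ _) ?_
    exact (continuous_of_discreteTopology
      (f := ((((θ a : B) : H) : Equiv.Perm X) : X → X))).comp (happ z)
  haveI : PolishSpace ((X → X) × (X → X)) := by
    haveI : PolishSpace X := inferInstance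
    infer_instance
  have hZe : IsClosedEmbedding (fun z : hnnZ H A B θ => e z.val) :=
    hce.comp hZc.isClosedEmbedding_subtypeVal
  haveI : PolishSpace (hnnZ H A B θ) := hZe.polishSpace
  infer_instance

lemma dense_link (H : Subgroup (Equiv.Perm X)) (A B : Subgroup H)
    [Finite A] (θ : A ≃* B)
    (hfreeB : ∀ b : B, b ≠ 1 → ∀ x : X, ((b : H) : Equiv.Perm X) x ≠ x)
    (hinf : HasInfiniteOrbits H.subtype) (x y : X) :
    Dense {w : hnnZ H A B θ | ∃ g, hnnPi H A B θ w g x = y} := by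
  classical
  letI : TopologicalSpace X := ⊥
  haveI : DiscreteTopology X := ⟨rfl⟩
  haveI : Finite B := Finite.of_equiv A θ.toEquiv
  rw [dense_iff_inter_open]
  rintro U hU ⟨w0, hw0U⟩
  obtain ⟨V, hV, rfl⟩ := isOpen_induced_iff.mp hU
  obtain ⟨O, hO, rfl⟩ := isOpen_induced_iff.mp hV
  have hfO : (w0.1 : X → X) ∈ O := hw0U
  obtain ⟨I, u, hu, hIpi⟩ := isOpen_pi_iff.mp hO _ hfO
  set φA : A →* Equiv.Perm X := H.subtype.comp A.subtype with hφA
  set φB : B →* Equiv.Perm X := H.subtype.comp B.subtype with hφB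
  have hwz : ∀ (a : A) (z : X), w0.1 (φA a z) = φB (θ a) (w0.1 z) :=
    fun a z => mem_hnnZ_iff.mp w0.2 a z
  have hB : ∀ (b b' : B) (z : X), φB b z = φB b' z → b = b' :=
    fun b b' z h => free_cancel hfreeB h
  -- choose x'
  have hFxfin : (⋃ a : A, (φA a) ⁻¹' (I : Set X)).Finite :=
    Set.finite_iUnion fun a => I.finite_toSet.preimage ((Equiv.injective _).injOn)
  obtain ⟨x', hx'⟩ := ((hinf x).diff hFxfin).nonempty
  obtain ⟨⟨h₁, hh₁⟩, hx'Fx⟩ := hx'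
  set p : X := w0.1 x' with hp
  -- choose y'
  have hFyfin : (⋃ b : B, (φB b) ⁻¹' (insert p (w0.1 '' I))).Finite :=
    Set.finite_iUnion fun b =>
      ((I.finite_toSet.image _).insert p).preimage ((Equiv.injective _).injOn)
  obtain ⟨y', hy'⟩ := ((hinf y).diff hFyfin).nonempty
  obtain ⟨⟨h₂, hh₂⟩, hy'Fy⟩ := hy'
  have hy'p : ∀ b : B, φB b y' ≠ p := by
    intro b hb
    exact hy'Fy (Set.mem_iUnion.2 ⟨b, Set.mem_preimage.2 (by rw [hb]; exact Set.mem_insert _ _)⟩)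
  have hy'I : ∀ (b : B), ∀ i ∈ I, φB b y' ≠ w0.1 i := by
    intro b i hi hb
    exact hy'Fy (Set.mem_iUnion.2 ⟨b, Set.mem_preimage.2
      (by rw [hb]; exact Set.mem_insert_of_mem _ ⟨i, hi, rfl⟩)⟩)
  have horb : ∀ b b' : B, φB b y' ≠ φB b' p := by
    intro b b' hb
    apply hy'p (b'⁻¹ * b)
    rw [map_mul, map_inv, Equiv.Perm.mul_apply, hb, perm_inv_apply_self']
  have hx'I : ∀ a : A, φA a x' ∉ (I : Set X) :=
    fun a ha => hx'Fx (Set.mem_iUnion.2 ⟨a, ha⟩)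
  -- the involution
  set f : X → X := fun z =>
    if h : ∃ b : B, φB b p = z then φB h.choose y'
    else if h' : ∃ b : B, φB b y' = z then φB h'.choose p
    else z with hf
  have f1 : ∀ b : B, f (φB b p) = φB b y' := by
    intro b
    have h : ∃ b' : B, φB b' p = φB b p := ⟨b, rfl⟩
    simp only [hf]
    rw [dif_pos h, hB _ _ _ h.choose_spec]
  have f2 : ∀ b : B, f (φB b y') = φB b p := by
    intro b
    have hno : ¬ ∃ b' : B, φB b' p = φB b y' := by
      rintro ⟨b', hb'⟩; exact horb b b' hb'.symm
    have h' : ∃ b' : B, φB b' y' = φB b y' := ⟨b, rfl⟩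
    simp only [hf]
    rw [dif_neg hno, dif_pos h', hB _ _ _ h'.choose_spec]
  have f3 : ∀ z, (¬ ∃ b : B, φB b p = z) → (¬ ∃ b : B, φB b y' = z) → f z = z := by
    intro z h h'
    simp only [hf]
    rw [dif_neg h, dif_neg h']
  have finv : Function.Involutive f := by
    intro z
    by_cases h : ∃ b : B, φB b p = z
    · obtain ⟨b, rfl⟩ := h; rw [f1, f2]
    · by_cases h' : ∃ b : B, φB b y' = z
      · obtain ⟨b, rfl⟩ := h'; rw [f2, f1]
      · rw [f3 z h h', f3 z h h']
  have fcomm : ∀ (b₀ : B) (z : X), f (φB b₀ z) = φB b₀ (f z) := by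
    intro b₀ z
    by_cases h : ∃ b : B, φB b p = z
    · obtain ⟨b, rfl⟩ := h
      have e1 : φB b₀ (φB b p) = φB (b₀ * b) p := by rw [map_mul, Equiv.Perm.mul_apply]
      rw [e1, f1, f1, map_mul, Equiv.Perm.mul_apply]
    · by_cases h' : ∃ b : B, φB b y' = z
      · obtain ⟨b, rfl⟩ := h'
        have e1 : φB b₀ (φB b y') = φB (b₀ * b) y' := by rw [map_mul, Equiv.Perm.mul_apply]
        rw [e1, f2, f2, map_mul, Equiv.Perm.mul_apply]
      · have hh : ¬ ∃ b : B, φB b p = φB b₀ z := by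
          rintro ⟨b, hb⟩
          exact h ⟨b₀⁻¹ * b, by
            rw [map_mul, map_inv, Equiv.Perm.mul_apply, hb, perm_inv_apply_self']⟩
        have hh' : ¬ ∃ b : B, φB b y' = φB b₀ z := by
          rintro ⟨b, hb⟩
          exact h' ⟨b₀⁻¹ * b, by
            rw [map_mul, map_inv, Equiv.Perm.mul_apply, hb, perm_inv_apply_self']⟩
        rw [f3 _ hh hh', f3 z h h']
  set τ : Equiv.Perm X := finv.toPerm f with hτ
  set w' : Equiv.Perm X := τ * w0.1 with hw'
  have hw'z : ∀ z : X, w' z = f (w0.1 z) := fun z => rfl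
  have hw'mem : w' ∈ hnnZ H A B θ := by
    rw [mem_hnnZ_iff]
    intro a z
    calc w' (((a : H) : Equiv.Perm X) z) = f (w0.1 (φA a z)) := rfl
      _ = f (φB (θ a) (w0.1 z)) := by rw [hwz]
      _ = φB (θ a) (f (w0.1 z)) := fcomm _ _
      _ = (((θ a : B) : H) : Equiv.Perm X) (w' z) := rfl
  have hagree : ∀ i ∈ I, w' i = w0.1 i := by
    intro i hi
    show f (w0.1 i) = w0.1 i
    refine f3 _ ?_ ?_
    · rintro ⟨b, hb⟩
      have h5 : w0.1 (φA (θ.symm b) x') = w0.1 i := by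
        rw [hwz (θ.symm b) x', MulEquiv.apply_symm_apply]
        exact hb
      have h6 : φA (θ.symm b) x' = i := w0.1.injective h5
      exact hx'I (θ.symm b) (by rw [h6]; exact hi)
    · rintro ⟨b, hb⟩
      exact hy'I b i hi hb
  have hlink : w' x' = y' := by
    show f p = y'
    have h7 := f1 1
    simpa using h7
  refine ⟨⟨w', hw'mem⟩, ?_, ?_⟩
  · show (w' : X → X) ∈ O
    apply hIpi
    exact Set.mem_pi.2 fun i hi => by rw [hagree i hi]; exact (hu i hi).2
  · show ∃ g, hnnPi H A B θ ⟨w', hw'mem⟩ g x = y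
    refine ⟨HNNExtension.of h₂⁻¹ * HNNExtension.t * HNNExtension.of h₁, ?_⟩
    have h8 : hnnPi H A B θ ⟨w', hw'mem⟩
        (HNNExtension.of h₂⁻¹ * HNNExtension.t * HNNExtension.of h₁)
        = H.subtype h₂⁻¹ * w' * H.subtype h₁ := by
      simp [hnnPi, map_mul]
    rw [h8]
    have h9 : (H.subtype h₂⁻¹ * w' * H.subtype h₁) x
        = H.subtype h₂⁻¹ (w' (H.subtype h₁ x)) := by
      simp [Equiv.Perm.mul_apply]
    rw [h9, hh₁, hlink, ← hh₂, map_inv, perm_inv_apply_self']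

end HNNProof

/-- **Lemma 3.1.**  Let `X` be an infinite countable set, `H ≤ S(X)` a countable
subgroup, `A ≤ H` a finite subgroup and `θ : A ≃* B` an isomorphism onto a subgroup
`B ≤ H` (an injective homomorphism `A → H`), such that `A` and `B` act freely on `X`.
If the action `H ↷ X` has infinite orbits, then
`U = {w ∈ Z : π_w is transitive}` is a dense `G_δ` subset of `Z`. -/
theorem hnn_transitive_dense_Gdelta
    {X : Type} [Countable X] [Infinite X]
    (H : Subgroup (Equiv.Perm X)) [Countable H]
    (A B : Subgroup H) [Finite A] (θ : A ≃* B)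
    (hfreeA : ∀ a : A, a ≠ 1 → ∀ x : X, ((a : H) : Equiv.Perm X) x ≠ x)
    (hfreeB : ∀ b : B, b ≠ 1 → ∀ x : X, ((b : H) : Equiv.Perm X) x ≠ x)
    (hinf : HasInfiniteOrbits H.subtype) :
    Dense {w : hnnZ H A B θ | IsTransitiveAction (hnnPi H A B θ w)} ∧
    IsGδ {w : hnnZ H A B θ | IsTransitiveAction (hnnPi H A B θ w)} := by
  have hUeq : {w : hnnZ H A B θ | IsTransitiveAction (hnnPi H A B θ w)}
      = ⋂ q : X × X, {w : hnnZ H A B θ | ∃ g, hnnPi H A B θ w g q.1 = q.2} := by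
    ext w
    simp only [Set.mem_iInter, Set.mem_setOf_eq]
    exact ⟨fun h q => h q.1 q.2, fun h a b => h (a, b)⟩
  have hopen : ∀ q : X × X,
      IsOpen {w : hnnZ H A B θ | ∃ g, hnnPi H A B θ w g q.1 = q.2} := by
    intro q
    have he : {w : hnnZ H A B θ | ∃ g, hnnPi H A B θ w g q.1 = q.2}
        = ⋃ g, {w : hnnZ H A B θ | hnnPi H A B θ w g q.1 = q.2} := by
      ext w; simp
    rw [he]
    exact isOpen_iUnion fun g => isOpen_hnnPi_eval H A B θ g q.1 q.2
  constructor
  · rw [hUeq]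
    haveI := baireSpace_hnnZ H A B θ
    exact dense_iInter_of_isOpen hopen fun q => dense_link H A B θ hfreeB hinf q.1 q.2
  · rw [hUeq]
    exact IsGδ.iInter fun q => (hopen q).isGδ
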